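/- Let C be a small category, Y a simplicial set, and δ a nonsingular twisted structure on C with coefficients in Y. Let X = Y ×_δ N(C) be the δ-twisted Cartesian product (the simplicial set with n-simplices Y_n × N(C)_n, twisted faces d_i^δ(y,σ) = (δ_{v_i}(d_i y), d_i σ) and twisted degeneracies s_i^δ(y,σ) = (δ_{v_i}^{-1}(s_i y), s_i σ)), and let p : X → N(C) be the second-coordinate projection. Then p is a simplicial map, and for every n and every n-simplex b of N(C), with f_b : Δ[n] → N(C) the simplicial map representing b, the pullback of p along f_b in the category of simplicial sets is isomorphic, as a simplicial set over Δ[n], to the projection Y × Δ[n] → Δ[n]. In other words, p is a simplicial fibre bundle with fibre Y. -/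

import Mathlib

open CategoryTheory Simplicial

universe u

namespace TwistedBundle

/-- The `i`-th vertex of an `n`-simplex of the nerve of a small category `C`. -/
def nerveVertex {C : Type u} [SmallCategory C] {n : ℕ}
    (σ : nerve C _⦋n⦌) (i : Fin (n + 1)) : C :=
  σ.obj i

/-- The twisted face map `d_i^δ(y, σ) = (δ_{v_i}(d_i y), d_i σ)` of the δ-twisted Cartesian
product `Y ×_δ N(C)`. -/
def twistedFace {C : Type u} [SmallCategory C] (Y : SSet.{u})
    (δ : C → (Y ≅ Y)) {n : ℕ} (i : Fin (n + 2)) :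
    Y _⦋n + 1⦌ × nerve C _⦋n + 1⦌ → Y _⦋n⦌ × nerve C _⦋n⦌ :=
  fun p => ((δ (nerveVertex p.2 i)).hom.app (Opposite.op (SimplexCategory.mk n)) (Y.δ i p.1),
    (nerve C).δ i p.2)

/-- The twisted degeneracy map `s_i^δ(y, σ) = (δ_{v_i}⁻¹(s_i y), s_i σ)` of `Y ×_δ N(C)`. -/
def twistedDegeneracy {C : Type u} [SmallCategory C] (Y : SSet.{u})
    (δ : C → (Y ≅ Y)) {n : ℕ} (i : Fin (n + 1)) :
    Y _⦋n⦌ × nerve C _⦋n⦌ → Y _⦋n + 1⦌ × nerve C _⦋n + 1⦌ :=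
  fun p => ((δ (nerveVertex p.2 i)).inv.app (Opposite.op (SimplexCategory.mk (n + 1)))
      (Y.σ i p.1),
    (nerve C).σ i p.2)

/-- The `q`-simplices of the standard simplicial `n`-simplex `Δ[n]`:
monotone maps `{0,…,q} → {0,…,n}`. -/
def DeltaSimp (n q : ℕ) : Type :=
  { w : Fin (q + 1) → Fin (n + 1) // Monotone w }

/-- The face `d_i` of `Δ[n]`. -/
def DeltaSimp.face {n q : ℕ} (i : Fin (q + 2)) (w : DeltaSimp n (q + 1)) : DeltaSimp n q :=
  ⟨w.1 ∘ i.succAbove, w.2.comp (Fin.strictMono_succAbove i).monotone⟩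

/-- The degeneracy `s_i` of `Δ[n]`. -/
def DeltaSimp.degen {n q : ℕ} (i : Fin (q + 1)) (w : DeltaSimp n q) : DeltaSimp n (q + 1) :=
  ⟨w.1 ∘ i.predAbove, w.2.comp (Fin.predAbove_right_monotone i)⟩

/-- `f_b(w)`: the `q`-simplex of the nerve obtained by applying the representing map
`f_b : Δ[n] → N(C)` of the `n`-simplex `b` to the `q`-simplex `w` of `Δ[n]`. -/
def pull {C : Type u} [SmallCategory C] {n : ℕ} (b : nerve C _⦋n⦌) {q : ℕ}
    (w : DeltaSimp n q) : nerve C _⦋q⦌ :=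
  (nerve C).map (SimplexCategory.mkHom ⟨w.1, w.2⟩).op b

end TwistedBundle

open TwistedBundle in
/-- let `δ` be a nonsingular twisted structure on a small category `C` with
coefficients in a simplicial set `Y`, and let `X = Y ×_δ N(C)` be the δ-twisted Cartesian
product.  Then the second-coordinate projection `p : X → N(C)` is a simplicial map, and for
every `n`-simplex `b` of `N(C)` the pullback of `p` along the representing map
`f_b : Δ[n] → N(C)` is isomorphic, as a simplicial set over `Δ[n]`, to the projection
`Y × Δ[n] → Δ[n]`; i.e. `p` is a simplicial fibre bundle with fibre `Y`.  The isomorphism is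
given by a family of maps `β_q` from `Y_q × Δ[n]_q` to the pullback that is levelwise
bijective onto the pullback, commutes with the projections to `Δ[n]`, and intertwines the
(untwisted) faces and degeneracies of `Y × Δ[n]` with the (twisted) ones of the pullback. -/
theorem TwistedBundle.fibre_bundle {C : Type u} [SmallCategory C] (Y : SSet.{u})
    (δ : C → (Y ≅ Y))
    (hcomm : ∀ v w : C, (Nonempty (v ⟶ w) ∨ Nonempty (w ⟶ v)) →
      (δ v).hom ≫ (δ w).hom = (δ w).hom ≫ (δ v).hom) :
    -- the projection `p` commutes with the twisted faces and degeneracies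
    (∀ (q : ℕ) (i : Fin (q + 2)) (x : Y _⦋q + 1⦌ × nerve C _⦋q + 1⦌),
      (twistedFace Y δ i x).2 = (nerve C).δ i x.2) ∧
    (∀ (q : ℕ) (i : Fin (q + 1)) (x : Y _⦋q⦌ × nerve C _⦋q⦌),
      (twistedDegeneracy Y δ i x).2 = (nerve C).σ i x.2) ∧
    -- for each simplex `b` of the nerve, the pullback of `p` along `f_b` is trivial
    (∀ (n : ℕ) (b : nerve C _⦋n⦌),
      ∃ β : ∀ q : ℕ, Y _⦋q⦌ × DeltaSimp n q → (Y _⦋q⦌ × nerve C _⦋q⦌) × DeltaSimp n q,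
        -- β lands in the pullback of `p` along `f_b`
        (∀ (q : ℕ) (p : Y _⦋q⦌ × DeltaSimp n q), (β q p).1.2 = pull b (β q p).2) ∧
        -- β commutes with the projections to `Δ[n]`
        (∀ (q : ℕ) (p : Y _⦋q⦌ × DeltaSimp n q), (β q p).2 = p.2) ∧
        -- β is injective and surjective onto the pullback
        (∀ q : ℕ, Function.Injective (β q)) ∧
        (∀ (q : ℕ) (z : (Y _⦋q⦌ × nerve C _⦋q⦌) × DeltaSimp n q),
          z.1.2 = pull b z.2 → z ∈ Set.range (β q)) ∧
        -- β intertwines the faces of `Y × Δ[n]` with the twisted faces of the pullback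
        (∀ (q : ℕ) (i : Fin (q + 2)) (y : Y _⦋q + 1⦌) (w : DeltaSimp n (q + 1)),
          β q (Y.δ i y, w.face i) =
            (twistedFace Y δ i (β (q + 1) (y, w)).1, ((β (q + 1) (y, w)).2).face i)) ∧
        -- β intertwines the degeneracies of `Y × Δ[n]` with the twisted ones
        (∀ (q : ℕ) (i : Fin (q + 1)) (y : Y _⦋q⦌) (w : DeltaSimp n q),
          β (q + 1) (Y.σ i y, w.degen i) =
            (twistedDegeneracy Y δ i (β q (y, w)).1, ((β q (y, w)).2).degen i))) := by
  refine ⟨fun q i x => rfl, fun q i x => rfl, fun n b => ?_⟩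
  -- the automorphisms attached to the vertices of `b`, which pairwise commute
  let D : Fin (n + 1) → Aut Y := fun u => δ (b.obj u)
  have hD : ∀ u u' : Fin (n + 1), Commute (D u) (D u') := by
    intro u u'
    have h : Nonempty (b.obj u ⟶ b.obj u') ∨ Nonempty (b.obj u' ⟶ b.obj u) := by
      rcases le_total u u' with h | h
      · exact Or.inl ⟨b.map (homOfLE h)⟩
      · exact Or.inr ⟨b.map (homOfLE h)⟩
    exact Iso.ext (hcomm _ _ h).symm
  let S := Subgroup.closure (Set.range D)
  letI : CommGroup S := Subgroup.closureCommGroupOfComm (by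
    rintro _ ⟨u, rfl⟩ _ ⟨u', rfl⟩; exact hD u u')
  let E : Fin (n + 1) → S := fun u => ⟨D u, Subgroup.subset_closure ⟨u, rfl⟩⟩
  let Φ : ∀ {q : ℕ}, DeltaSimp n q → S :=
    fun {q} w => ∏ j : Fin (q + 1), (E (w.1 j))⁻¹
  -- key algebraic identities
  have hface : ∀ (q : ℕ) (i : Fin (q + 2)) (w : DeltaSimp n (q + 1)),
      (Φ (w.face i) : Aut Y) = D (w.1 i) * (Φ w : Aut Y) := by
    intro q i w
    have h1 : (∏ j : Fin (q + 2), (E (w.1 j))⁻¹ : S) =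
        (E (w.1 i))⁻¹ * ∏ j : Fin (q + 1), (E (w.1 (i.succAbove j)))⁻¹ := by
      exact Fin.prod_univ_succAbove (fun j => (E (w.1 j))⁻¹) i
    have h2 : (E (w.1 i)) * Φ w = Φ (w.face i) := by
      show (E (w.1 i)) * ∏ j : Fin (q + 2), (E (w.1 j))⁻¹ =
        ∏ j : Fin (q + 1), (E (w.1 (i.succAbove j)))⁻¹
      rw [h1, mul_inv_cancel_left]
    rw [← h2]
    rfl
  have hdeg : ∀ (q : ℕ) (i : Fin (q + 1)) (w : DeltaSimp n q),
      (Φ (w.degen i) : Aut Y) = (D (w.1 i))⁻¹ * (Φ w : Aut Y) := by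
    intro q i w
    have h1 : (∏ j : Fin (q + 2), (E (w.1 (i.predAbove j)))⁻¹ : S) =
        (E (w.1 (i.predAbove i.castSucc)))⁻¹ *
          ∏ j : Fin (q + 1), (E (w.1 (i.predAbove (i.castSucc.succAbove j))))⁻¹ := by
      exact Fin.prod_univ_succAbove (fun j => (E (w.1 (i.predAbove j)))⁻¹) i.castSucc
    have h2 : Φ (w.degen i) = (E (w.1 i))⁻¹ * Φ w := by
      show (∏ j : Fin (q + 2), (E (w.1 (i.predAbove j)))⁻¹ : S) = _
      rw [h1]
      simp only [Fin.predAbove_succAbove, Fin.predAbove_castSucc_self]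
      rfl
    rw [h2]
    rfl
  -- the trivialising map
  refine ⟨fun q p => (((Φ p.2 : Aut Y).hom.app (Opposite.op (SimplexCategory.mk q)) p.1,
      pull b p.2), p.2), fun q p => rfl, fun q p => rfl, ?_, ?_, ?_, ?_⟩
  · -- injectivity
    rintro q ⟨y₁, w₁⟩ ⟨y₂, w₂⟩ h
    have hw : w₁ = w₂ := congrArg Prod.snd h
    subst hw
    have hy : (Φ w₁ : Aut Y).hom.app (Opposite.op (SimplexCategory.mk q)) y₁ =
        (Φ w₁ : Aut Y).hom.app (Opposite.op (SimplexCategory.mk q)) y₂ :=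
      congrArg (fun z => z.1.1) h
    have := ((Φ w₁ : Aut Y).app (Opposite.op (SimplexCategory.mk q))).toEquiv.injective hy
    rw [this]
  · -- surjectivity onto the pullback
    rintro q ⟨⟨y, σ⟩, w⟩ hz
    refine ⟨(((Φ w : Aut Y).app (Opposite.op (SimplexCategory.mk q))).toEquiv.symm y, w), ?_⟩
    simp only at hz
    have : ((Φ w : Aut Y).app (Opposite.op (SimplexCategory.mk q))).toEquiv
        ((((Φ w : Aut Y).app (Opposite.op (SimplexCategory.mk q))).toEquiv.symm y)) = y :=
      Equiv.apply_symm_apply _ _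
    refine Prod.ext (Prod.ext ?_ ?_) rfl
    · exact this
    · exact hz.symm
  · -- faces
    intro q i y w
    refine Prod.ext (Prod.ext ?_ ?_) rfl
    · show (Φ (w.face i) : Aut Y).hom.app _ (Y.δ i y) =
        (δ (nerveVertex (pull b w) i)).hom.app _ (Y.δ i ((Φ w : Aut Y).hom.app _ y))
      have hv : nerveVertex (pull b w) i = b.obj (w.1 i) := rfl
      rw [hv, hface q i w]
      show (D (w.1 i) * (Φ w : Aut Y)).hom.app _ (Y.δ i y) =
        (D (w.1 i)).hom.app _ (Y.map (SimplexCategory.δ i).op ((Φ w : Aut Y).hom.app _ y))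
      rw [← FunctorToTypes.naturality]
      rfl
    · show pull b (w.face i) = (nerve C).map (SimplexCategory.δ i).op (pull b w)
      rw [pull, pull, ← FunctorToTypes.map_comp_apply, ← op_comp]
      rfl
  · -- degeneracies
    intro q i y w
    refine Prod.ext (Prod.ext ?_ ?_) rfl
    · show (Φ (w.degen i) : Aut Y).hom.app _ (Y.σ i y) =
        (δ (nerveVertex (pull b w) i)).inv.app _ (Y.σ i ((Φ w : Aut Y).hom.app _ y))
      have hv : nerveVertex (pull b w) i = b.obj (w.1 i) := rfl
      rw [hv, hdeg q i w]
      show ((D (w.1 i))⁻¹ * (Φ w : Aut Y)).hom.app _ (Y.σ i y) =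
        (D (w.1 i)).inv.app _ (Y.map (SimplexCategory.σ i).op ((Φ w : Aut Y).hom.app _ y))
      rw [← FunctorToTypes.naturality]
      rfl
    · show pull b (w.degen i) = (nerve C).map (SimplexCategory.σ i).op (pull b w)
      rw [pull, pull, ← FunctorToTypes.map_comp_apply, ← op_comp]
      rfl
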